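/- arXiv:1909.05590 — 3 statements merged into one kernel-verified Lean document; each statement's English description precedes it below -/
import Mathlib

section
/- Let f : [0,∞) → ℝ be càdlàg with only positive jumps, and let (l, r) with r < ∞ be an excursion of f above its past minimum, i.e., f(t) − f̲(t) > 0 for all t ∈ (l, r), with l, r in the closure of the zero set Z_f = {t : f(t) = f̲(t)}. Then f is continuous at r and f(r) = f̲(r) (so r ∈ Z_f). -/
open Set Filter

/-- A càdlàg function is bounded below on compact intervals `[0, T]`. -/
lemma cadlag_bddBelow_Icc (f L : ℝ → ℝ)
    (hrc : ∀ t ∈ Ici (0:ℝ), ContinuousWithinAt f (Ici t) t)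
    (hll : ∀ t : ℝ, 0 < t → Tendsto f (nhdsWithin t (Iio t)) (nhds (L t)))
    (T : ℝ) (hT : 0 ≤ T) : BddBelow (f '' Icc 0 T) := by
  refine (isCompact_Icc : IsCompact (Icc (0:ℝ) T)).induction_on
    (p := fun s => BddBelow (f '' s))
    (by show BddBelow (f '' ∅); rw [image_empty]; exact bddBelow_empty)
    (fun s t hst h => h.mono (image_mono (f := f) hst))
    (fun s t hs ht => by
      show BddBelow (f '' (s ∪ t)); rw [image_union]; exact hs.union ht) ?_
  intro x hx
  rcases eq_or_lt_of_le hx.1 with hx0 | hx0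
  · -- x = 0
    have h1 : Tendsto f (nhdsWithin x (Ici x)) (nhds (f x)) := hrc x hx.1
    have e1 : ∀ᶠ y in nhdsWithin x (Ici x), f x - 1 < f y :=
      h1.eventually (eventually_gt_nhds (by linarith))
    have hle : nhdsWithin x (Icc 0 T) ≤ nhdsWithin x (Ici x) :=
      nhdsWithin_mono x (by rw [← hx0]; exact Icc_subset_Ici_self)
    obtain ⟨t, ht, htC⟩ := (e1.filter_mono hle).exists_mem
    exact ⟨t, ht, f x - 1, by rintro _ ⟨y, hy, rfl⟩; exact (htC y hy).le⟩
  · set C : ℝ := min (f x) (L x) - 1 with hC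
    have h1 : Tendsto f (nhdsWithin x (Ici x)) (nhds (f x)) := hrc x hx.1
    have h2 : Tendsto f (nhdsWithin x (Iio x)) (nhds (L x)) := hll x hx0
    have e1 : ∀ᶠ y in nhdsWithin x (Ici x), C < f y :=
      h1.eventually (eventually_gt_nhds (by
        have := min_le_left (f x) (L x); linarith))
    have e2 : ∀ᶠ y in nhdsWithin x (Iio x), C < f y :=
      h2.eventually (eventually_gt_nhds (by
        have := min_le_right (f x) (L x); linarith))
    have hle : nhdsWithin x (Icc 0 T) ≤
        nhdsWithin x (Iio x) ⊔ nhdsWithin x (Ici x) := by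
      rw [← nhdsWithin_union]
      exact nhdsWithin_mono x (fun y _ => (lt_or_ge y x).imp id id)
    have e : ∀ᶠ y in nhdsWithin x (Icc 0 T), C < f y :=
      Filter.Eventually.filter_mono hle (eventually_sup.mpr ⟨e2, e1⟩)
    obtain ⟨t, ht, htC⟩ := e.exists_mem
    exact ⟨t, ht, C, by rintro _ ⟨y, hy, rfl⟩; exact (htC y hy).le⟩

/-- If `f` is càdlàg with only positive jumps and `(l, r)` is an excursion of `f` above
its past minimum, then `f` is continuous at `r` and `f r` equals the running minimum at `r`. -/
theorem excursion_endpoint_continuous (f : ℝ → ℝ) (L : ℝ → ℝ) (l r : ℝ)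
    (hrc : ∀ t ∈ Ici (0:ℝ), ContinuousWithinAt f (Ici t) t)
    (hll : ∀ t : ℝ, 0 < t → Tendsto f (nhdsWithin t (Iio t)) (nhds (L t)))
    (hjump : ∀ t : ℝ, 0 < t → L t ≤ f t)
    (hl : 0 ≤ l) (hlr : l < r)
    (hexc : ∀ t ∈ Ioo l r, sInf (f '' Icc 0 t) < f t)
    (hlZ : l ∈ closure {t : ℝ | 0 ≤ t ∧ f t = sInf (f '' Icc 0 t)})
    (hrZ : r ∈ closure {t : ℝ | 0 ≤ t ∧ f t = sInf (f '' Icc 0 t)}) :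
    ContinuousAt f r ∧ f r = sInf (f '' Icc 0 r) := by
  have hbdd : ∀ T : ℝ, 0 ≤ T → BddBelow (f '' Icc 0 T) :=
    fun T hT => cadlag_bddBelow_Icc f L hrc hll T hT
  have hne : ∀ T : ℝ, 0 ≤ T → (f '' Icc 0 T).Nonempty :=
    fun T hT => ⟨f 0, mem_image_of_mem f ⟨le_refl 0, hT⟩⟩
  have hr0 : 0 < r := lt_of_le_of_lt hl hlr
  set Z : Set ℝ := {t : ℝ | 0 ≤ t ∧ f t = sInf (f '' Icc 0 t)} with hZ
  -- Z avoids (l, r)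
  have hZsub : Z ⊆ Iic l ∪ Ici r := by
    intro z hz
    by_contra h
    rw [mem_union, mem_Iic, mem_Ici, not_or, not_le, not_le] at h
    exact absurd hz.2 (ne_of_gt (hexc z ⟨h.1, h.2⟩))
  -- r is in the closure of Z ∩ Ici r
  have hrcl : r ∈ closure (Z ∩ Ici r) := by
    have hsub : closure Z ⊆ closure (Z ∩ Iic l) ∪ closure (Z ∩ Ici r) := by
      rw [← closure_union]
      apply closure_mono
      intro z hz
      rcases hZsub hz with h | h
      · exact Or.inl ⟨hz, h⟩
      · exact Or.inr ⟨hz, h⟩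
    rcases hsub hrZ with h | h
    · exfalso
      have : r ∈ Iic l :=
        closure_minimal inter_subset_right isClosed_Iic h
      exact absurd this (not_le.mpr hlr)
    · exact h
  have hnb : (nhdsWithin r (Z ∩ Ici r)).NeBot :=
    mem_closure_iff_nhdsWithin_neBot.mp hrcl
  have htend : Tendsto f (nhdsWithin r (Z ∩ Ici r)) (nhds (f r)) :=
    (hrc r hr0.le).mono_left (nhdsWithin_mono r inter_subset_right)
  -- f r is a lower bound for f on [0, r]
  have hfr_le : ∀ s ∈ Icc (0:ℝ) r, f r ≤ f s := by
    intro s hs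
    refine le_of_tendsto htend ?_
    filter_upwards [eventually_mem_nhdsWithin] with t ht
    obtain ⟨⟨ht0, htf⟩, htr⟩ := ht
    rw [htf]
    exact csInf_le (hbdd t ht0) (mem_image_of_mem f ⟨hs.1, hs.2.trans htr⟩)
  have hrZ' : f r = sInf (f '' Icc 0 r) := by
    refine le_antisymm ?_ (csInf_le (hbdd r hr0.le)
      (mem_image_of_mem f ⟨hr0.le, le_refl r⟩))
    refine le_csInf (hne r hr0.le) ?_
    rintro _ ⟨s, hs, rfl⟩
    exact hfr_le s hs
  -- left limit equals f r
  have hLr : Tendsto f (nhdsWithin r (Iio r)) (nhds (L r)) := hll r hr0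
  have hge : f r ≤ L r := by
    refine ge_of_tendsto hLr ?_
    have hev : Ioo l r ∈ nhdsWithin r (Iio r) :=
      Ioo_mem_nhdsLT_of_mem ⟨hlr, le_refl r⟩
    filter_upwards [hev] with t ht
    have h1 : sInf (f '' Icc 0 r) ≤ sInf (f '' Icc 0 t) :=
      csInf_le_csInf (hbdd r hr0.le) (hne t (le_of_lt (lt_of_le_of_lt hl ht.1)))
        (image_mono (f := f) (Icc_subset_Icc_right ht.2.le))
    rw [hrZ']
    exact h1.trans (hexc t ht).le
  have hLr_eq : L r = f r := le_antisymm (hjump r hr0) hge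
  have hleft : Tendsto f (nhdsWithin r (Iio r)) (nhds (f r)) := hLr_eq ▸ hLr
  have hsup : nhdsWithin r (Iio r) ⊔ nhdsWithin r (Ici r) = nhds r :=
    nhdsLT_sup_nhdsGE r
  refine ⟨?_, hrZ'⟩
  rw [ContinuousAt, ← hsup, tendsto_sup]
  exact ⟨hleft, hrc r hr0.le⟩
end

section
/- Let (θ_i)_{i≥1} be positive reals with ∑_i θ_i² < ∞, let λ > 0, and let (N_i(t))_{t≥0} be independent Poisson processes with rates θ_i. Define L(t) = λ∑_i θ_i N_i(t) − t and R₀ = inf{t > 0 : L(t) < 0}. Then P(R₀ = 0) = 1; that is, the process L goes strictly below 0 immediately after time 0, almost surely. -/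
open MeasureTheory ProbabilityTheory Set
open scoped ENNReal NNReal

lemma my_lintegral_nat {Ω : Type*} [MeasurableSpace Ω] (P : Measure Ω)
    (f : Ω → ℕ) (hf : Measurable f) :
    ∫⁻ ω, (f ω : ℝ≥0∞) ∂P = ∑' k : ℕ, k * P {ω | f ω = k} := by
  have hrep : ∀ ω, (f ω : ℝ≥0∞)
      = ∑' k : ℕ, Set.indicator {ω | f ω = k} (fun _ => (k : ℝ≥0∞)) ω := by
    intro ω
    rw [tsum_eq_single (f ω)]
    · simp [Set.indicator_of_mem, Set.mem_setOf_eq]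
    · intro b hb
      exact Set.indicator_of_notMem (by simp [Ne.symm hb]) _
  have hms : ∀ k : ℕ, MeasurableSet {ω | f ω = k} := by
    intro k
    exact hf (measurableSet_singleton k)
  calc ∫⁻ ω, (f ω : ℝ≥0∞) ∂P
      = ∫⁻ ω, ∑' k : ℕ, Set.indicator {ω | f ω = k} (fun _ => (k : ℝ≥0∞)) ω ∂P := by
        exact lintegral_congr hrep
    _ = ∑' k : ℕ, ∫⁻ ω, Set.indicator {ω | f ω = k} (fun _ => (k : ℝ≥0∞)) ω ∂P := by
        exact lintegral_tsum (fun k => ((measurable_const.indicator (hms k)).aemeasurable))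
    _ = ∑' k : ℕ, k * P {ω | f ω = k} := by
        refine tsum_congr fun k => ?_
        exact lintegral_indicator_const (hms k) _

lemma my_partition {Ω : Type*} [MeasurableSpace Ω] (P : Measure Ω) [IsProbabilityMeasure P]
    (f : Ω → ℕ) (hf : Measurable f) :
    ∑' k : ℕ, P {ω | f ω = k} = 1 := by
  have : (⋃ k : ℕ, {ω | f ω = k}) = Set.univ := by
    ext ω; simp
  have hd : Pairwise (Function.onFun Disjoint fun k : ℕ => {ω | f ω = k}) := by
    intro i j hij
    simp only [Function.onFun, Set.disjoint_left, Set.mem_setOf_eq]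
    intro ω h1 h2
    exact hij (h1 ▸ h2 ▸ rfl)
  calc ∑' k : ℕ, P {ω | f ω = k}
      = P (⋃ k : ℕ, {ω | f ω = k}) :=
        (measure_iUnion hd (fun k => hf (measurableSet_singleton k))).symm
    _ = 1 := by rw [this]; simp

lemma my_poisson_mean {Ω : Type*} [MeasurableSpace Ω] (P : Measure Ω) [IsProbabilityMeasure P]
    (f : Ω → ℕ) (hf : Measurable f) (μ : ℝ) (hμ : 0 ≤ μ)
    (h : ∀ k : ℕ, P {ω | f ω = k}
      = ENNReal.ofReal (Real.exp (-μ) * μ ^ k / (Nat.factorial k))) :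
    ∫⁻ ω, (f ω : ℝ≥0∞) ∂P = ENNReal.ofReal μ := by
  have h1 : ∑' k : ℕ, P {ω | f ω = k} = 1 := my_partition P f hf
  rw [my_lintegral_nat P f hf]
  rw [tsum_eq_zero_add' ENNReal.summable]
  simp only [Nat.cast_zero, zero_mul, zero_add]
  have key : ∀ k : ℕ, ((k + 1 : ℕ) : ℝ≥0∞) * P {ω | f ω = k + 1}
      = ENNReal.ofReal μ * P {ω | f ω = k} := by
    intro k
    rw [h (k + 1), h k, ← ENNReal.ofReal_natCast (k + 1),
      ← ENNReal.ofReal_mul (Nat.cast_nonneg _), ← ENNReal.ofReal_mul hμ]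
    congr 1
    have hk : ((k : ℝ) + 1) ≠ 0 := by positivity
    have hfac : ((Nat.factorial k : ℝ)) ≠ 0 := by
      exact_mod_cast Nat.factorial_ne_zero k
    rw [Nat.factorial_succ]
    push_cast
    field_simp
    ring
  calc ∑' k : ℕ, ((k + 1 : ℕ) : ℝ≥0∞) * P {ω | f ω = k + 1}
      = ∑' k : ℕ, ENNReal.ofReal μ * P {ω | f ω = k} := tsum_congr key
    _ = ENNReal.ofReal μ * ∑' k : ℕ, P {ω | f ω = k} := ENNReal.tsum_mul_left
    _ = ENNReal.ofReal μ := by rw [h1, mul_one]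
lemma my_ofReal_prod {ι : Type*} (s : Finset ι) (f : ι → ℝ) (hf : ∀ i ∈ s, 0 ≤ f i) :
    ENNReal.ofReal (∏ i ∈ s, f i) = ∏ i ∈ s, ENNReal.ofReal (f i) := by
  induction s using Finset.cons_induction with
  | empty => simp
  | cons a s ha ih =>
      rw [Finset.prod_cons, Finset.prod_cons,
        ENNReal.ofReal_mul (hf a (Finset.mem_cons_self a s)),
        ih (fun i hi => hf i (Finset.mem_cons_of_mem hi))]

/-- Let `Nᵢ` be independent rate-`θᵢ` Poisson processes with `∑ θᵢ² < ∞`, and let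
`L(t) = λ ∑ᵢ θᵢ Nᵢ(t) − t`. Then `R₀ := inf{t > 0 : L(t) < 0}` equals `0` almost surely:
the process goes strictly below `0` immediately after time `0`. -/
theorem poisson_drift_hits_below_zero_immediately
    {Ω : Type*} [MeasurableSpace Ω] (P : Measure Ω) [IsProbabilityMeasure P]
    (θ : ℕ → ℝ) (hθ : ∀ i, 0 < θ i) (hθ2 : Summable (fun i => θ i ^ 2))
    (lam : ℝ) (hlam : 0 < lam)
    (N : ℕ → ℝ → Ω → ℕ)
    (hN0 : ∀ i ω, N i 0 ω = 0)
    (hmono : ∀ i ω, Monotone (fun t => N i t ω))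
    (hmeas : ∀ i t, Measurable (fun ω => N i t ω))
    (hPoisson : ∀ i, ∀ t : ℝ, 0 ≤ t → ∀ k : ℕ,
      P {ω | N i t ω = k} =
        ENNReal.ofReal (Real.exp (-(θ i * t)) * (θ i * t) ^ k / (Nat.factorial k)))
    (hindep : iIndepFun
      (fun i ω => (fun t => N i t ω : ℝ → ℕ)) P) :
    P {ω | (⨅ (t : ℝ) (_ : 0 < t ∧ lam * (∑' i, θ i * (N i t ω : ℝ)) - t < 0),
        ENNReal.ofReal t) = 0} = 1 := by
  classical
  set G : Ω → ℝ≥0∞ := fun ω => ⨅ (t : ℝ) (_ : 0 < t ∧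
      lam * (∑' i, θ i * (N i t ω : ℝ)) - t < 0), ENNReal.ofReal t with hG
  set ε : ℕ → ℝ := fun n => 1 / (n + 1) with hεdef
  have hεpos : ∀ n : ℕ, 0 < ε n := fun n => by positivity
  have hεanti : ∀ m n : ℕ, m ≤ n → ε n ≤ ε m := by
    intro m n h
    have : (m : ℝ) ≤ n := by exact_mod_cast h
    apply one_div_le_one_div_of_le (by positivity)
    linarith
  have hεlim : Filter.Tendsto ε Filter.atTop (nhds 0) :=
    tendsto_one_div_add_atTop_nhds_zero_nat
  set T : ℕ → ℕ → Ω → ℝ≥0∞ := fun K n ω =>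
    ∑' i : ℕ, ENNReal.ofReal (lam * θ (i + K)) * (N (i + K) (ε n) ω : ℝ≥0∞) with hT
  set A1 : ℕ → ℕ → Set Ω := fun K n =>
    ⋂ i ∈ Finset.range K, {ω | N i (ε n) ω = 0} with hA1
  set A : ℕ → ℕ → Set Ω := fun K n =>
    A1 K n ∩ {ω | T K n ω < ENNReal.ofReal (ε n)} with hA
  set tail : ℕ → ℝ≥0∞ := fun K => ∑' i : ℕ, ENNReal.ofReal (lam * θ (i + K) ^ 2) with htail
  have hNmeas : ∀ i (t : ℝ), Measurable (fun ω => ((N i t ω : ℕ) : ℝ≥0∞)) :=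
    fun i t => measurable_from_nat.comp (hmeas i t)
  have hTmeas : ∀ K n, Measurable (T K n) := fun K n =>
    Measurable.ennreal_tsum fun i => measurable_const.mul (hNmeas (i + K) (ε n))
  have hA1meas : ∀ K n, MeasurableSet (A1 K n) := fun K n =>
    Finset.measurableSet_biInter _ fun i _ =>
      (hmeas i (ε n)) (measurableSet_singleton 0)
  have hAmeas : ∀ K n, MeasurableSet (A K n) := fun K n =>
    (hA1meas K n).inter (measurableSet_lt (hTmeas K n) measurable_const)
  -- mean of the Poisson variables
  have hmean : ∀ i (t : ℝ), 0 < t →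
      ∫⁻ ω, (N i t ω : ℝ≥0∞) ∂P = ENNReal.ofReal (θ i * t) := by
    intro i t ht
    exact my_poisson_mean P _ (hmeas i t) (θ i * t)
      (by have := hθ i; positivity) (hPoisson i t ht.le)
  -- expected value of the tail sum
  have hTint : ∀ K n, ∫⁻ ω, T K n ω ∂P = ENNReal.ofReal (ε n) * tail K := by
    intro K n
    rw [hT]
    beta_reduce
    rw [lintegral_tsum (f := fun i ω => ENNReal.ofReal (lam * θ (i + K)) * (N (i + K) (ε n) ω : ℝ≥0∞)) (fun i =>
      (measurable_const.mul (hNmeas (i + K) (ε n))).aemeasurable)]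
    have hterm : ∀ i : ℕ,
        ∫⁻ ω, ENNReal.ofReal (lam * θ (i + K)) * (N (i + K) (ε n) ω : ℝ≥0∞) ∂P
        = ENNReal.ofReal (ε n) * ENNReal.ofReal (lam * θ (i + K) ^ 2) := by
      intro i
      rw [lintegral_const_mul _ (hNmeas (i + K) (ε n)), hmean (i + K) (ε n) (hεpos n),
        ← ENNReal.ofReal_mul (by have := hθ (i + K); positivity),
        ← ENNReal.ofReal_mul (hεpos n).le]
      congr 1
      ring
    rw [tsum_congr hterm, ENNReal.tsum_mul_left]
  -- Markov's inequality
  have hMarkov : ∀ K n, P {ω | ENNReal.ofReal (ε n) ≤ T K n ω} ≤ tail K := by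
    intro K n
    have h1 := mul_meas_ge_le_lintegral₀ (μ := P) (hTmeas K n).aemeasurable (ENNReal.ofReal (ε n))
    rw [hTint K n] at h1
    have hne : ENNReal.ofReal (ε n) ≠ 0 := by
      simp [ENNReal.ofReal_eq_zero, not_le, hεpos n]
    exact (ENNReal.mul_le_mul_iff_right hne ENNReal.ofReal_ne_top).mp h1
  -- probability of A1 via independence
  have hA1prob : ∀ K n, P (A1 K n)
      = ENNReal.ofReal (Real.exp (-(ε n * ∑ i ∈ Finset.range K, θ i))) := by
    intro K n
    have hsets : ∀ i ∈ Finset.range K,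
        MeasurableSet[(inferInstance : MeasurableSpace (ℝ → ℕ)).comap
          (fun ω t => N i t ω)] {ω | N i (ε n) ω = 0} := by
      intro i _
      exact ⟨(fun g : ℝ → ℕ => g (ε n)) ⁻¹' {0},
        (measurable_pi_apply (ε n)) (measurableSet_singleton 0), rfl⟩
    rw [hA1, hindep.meas_biInter hsets]
    have hval : ∀ i ∈ Finset.range K, P {ω | N i (ε n) ω = 0}
        = ENNReal.ofReal (Real.exp (-(θ i * ε n))) := by
      intro i _
      have := hPoisson i (ε n) (hεpos n).le 0
      simpa using this
    rw [Finset.prod_congr rfl hval,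
      ← my_ofReal_prod _ _ (fun i _ => (Real.exp_pos _).le), ← Real.exp_sum]
    congr 2
    rw [Finset.mul_sum, ← Finset.sum_neg_distrib]
    exact Finset.sum_congr rfl fun i _ => by ring
  -- the key inequality
  have hkey : ∀ K n, ENNReal.ofReal (Real.exp (-(ε n * ∑ i ∈ Finset.range K, θ i)))
      ≤ P (A K n) + tail K := by
    intro K n
    rw [← hA1prob K n]
    have hsub : A1 K n ⊆ A K n ∪ {ω | ENNReal.ofReal (ε n) ≤ T K n ω} := by
      intro ω hω
      by_cases hlt : T K n ω < ENNReal.ofReal (ε n)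
      · exact Or.inl ⟨hω, hlt⟩
      · exact Or.inr (not_lt.mp hlt)
    calc P (A1 K n) ≤ P (A K n ∪ {ω | ENNReal.ofReal (ε n) ≤ T K n ω}) :=
          measure_mono hsub
      _ ≤ P (A K n) + P {ω | ENNReal.ofReal (ε n) ≤ T K n ω} := measure_union_le _ _
      _ ≤ P (A K n) + tail K := add_le_add le_rfl (hMarkov K n)
  -- on A, the infimum is at most ε n
  have hAsub : ∀ K n ω, ω ∈ A K n → G ω ≤ ENNReal.ofReal (ε n) := by
    intro K n ω hω
    obtain ⟨h1, h2⟩ := hω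
    have h2' : T K n ω < ENNReal.ofReal (ε n) := h2
    have hL : lam * (∑' i, θ i * (N i (ε n) ω : ℝ)) - ε n < 0 := by
      by_cases hs : Summable (fun i => θ i * (N i (ε n) ω : ℝ))
      · have hzero : ∀ i ∈ Finset.range K, θ i * (N i (ε n) ω : ℝ) = 0 := by
          intro i hi
          have h0 : N i (ε n) ω = 0 := Set.mem_iInter₂.mp h1 i hi
          simp [h0]
        have hsplit : (∑' i, θ i * (N i (ε n) ω : ℝ))
            = ∑' i, θ (i + K) * (N (i + K) (ε n) ω : ℝ) := by
          rw [← hs.sum_add_tsum_nat_add K, Finset.sum_eq_zero hzero, zero_add]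
        have hshift : Summable (fun i => θ (i + K) * (N (i + K) (ε n) ω : ℝ)) :=
          (summable_nat_add_iff K).mpr hs
        have hofReal : ENNReal.ofReal
            (lam * ∑' i, θ (i + K) * (N (i + K) (ε n) ω : ℝ)) = T K n ω := by
          rw [← tsum_mul_left,
            ENNReal.ofReal_tsum_of_nonneg
              (fun i => by
                have := hθ (i + K)
                positivity)
              (hshift.mul_left lam)]
          refine tsum_congr fun i => ?_
          rw [show lam * (θ (i + K) * (N (i + K) (ε n) ω : ℝ))
              = (lam * θ (i + K)) * (N (i + K) (ε n) ω : ℝ) by ring,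
            ENNReal.ofReal_mul (by have := hθ (i + K); positivity),
            ENNReal.ofReal_natCast]
        rw [← hofReal] at h2'
        have hlt : lam * (∑' i, θ (i + K) * (N (i + K) (ε n) ω : ℝ)) < ε n :=
          (ENNReal.ofReal_lt_ofReal_iff (hεpos n)).mp h2'
        rw [hsplit]
        linarith
      · rw [tsum_eq_zero_of_not_summable hs, mul_zero, zero_sub]
        exact neg_lt_zero.mpr (hεpos n)
    exact iInf₂_le (ε n) ⟨hεpos n, hL⟩
  -- the decreasing unions
  set U : ℕ → ℕ → Set Ω := fun K m => ⋃ n, A K (n + m) with hU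
  have hUmeas : ∀ K m, MeasurableSet (U K m) :=
    fun K m => MeasurableSet.iUnion fun n => hAmeas K (n + m)
  have hUanti : ∀ K, Antitone (U K) := by
    intro K m m' h ω hω
    obtain ⟨n, hn⟩ := Set.mem_iUnion.mp hω
    exact Set.mem_iUnion.mpr ⟨n + (m' - m), by
      rwa [show n + (m' - m) + m = n + m' by omega]⟩
  have hUbound : ∀ K m, 1 ≤ P (U K m) + tail K := by
    intro K m
    have h1 : Filter.Tendsto (fun n : ℕ => ε (n + m)) Filter.atTop (nhds 0) :=
      hεlim.comp (Filter.tendsto_add_atTop_nat m)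
    have h2 : Filter.Tendsto
        (fun n => -(ε (n + m) * ∑ i ∈ Finset.range K, θ i)) Filter.atTop (nhds 0) := by
      simpa using (h1.mul_const (∑ i ∈ Finset.range K, θ i)).neg
    have h3 := (Real.continuous_exp.tendsto 0).comp h2
    rw [Real.exp_zero] at h3
    have htends : Filter.Tendsto
        (fun n => ENNReal.ofReal (Real.exp (-(ε (n + m) * ∑ i ∈ Finset.range K, θ i))))
        Filter.atTop (nhds 1) := by
      simpa using ENNReal.tendsto_ofReal h3
    refine le_of_tendsto' htends fun n => ?_
    calc ENNReal.ofReal (Real.exp (-(ε (n + m) * ∑ i ∈ Finset.range K, θ i)))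
        ≤ P (A K (n + m)) + tail K := hkey K (n + m)
      _ ≤ P (U K m) + tail K := by
          gcongr
          exact Set.subset_iUnion (fun k => A K (k + m)) n
  have hIbound : ∀ K, 1 ≤ P (⋂ m, U K m) + tail K := by
    intro K
    have ht := tendsto_measure_iInter_atTop
      (fun m => (hUmeas K m).nullMeasurableSet) (hUanti K) ⟨0, measure_ne_top P _⟩
    have ht2 : Filter.Tendsto (fun m => P (U K m) + tail K) Filter.atTop
        (nhds (P (⋂ m, U K m) + tail K)) := ht.add tendsto_const_nhds
    exact ge_of_tendsto' ht2 (hUbound K)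
  -- the intersection is contained in the target
  have hsubtarget : ∀ K, (⋂ m, U K m) ⊆ {ω | G ω = 0} := by
    intro K ω hω
    have hle : ∀ m, G ω ≤ ENNReal.ofReal (ε m) := by
      intro m
      obtain ⟨n, hn⟩ := Set.mem_iUnion.mp (Set.mem_iInter.mp hω m)
      calc G ω ≤ ENNReal.ofReal (ε (n + m)) := hAsub K (n + m) ω hn
        _ ≤ ENNReal.ofReal (ε m) :=
          ENNReal.ofReal_le_ofReal (hεanti m (n + m) (Nat.le_add_left m n))
    have h0 : G ω ≤ 0 := by
      have := ge_of_tendsto' (ENNReal.tendsto_ofReal hεlim) hle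
      simpa using this
    exact le_antisymm h0 bot_le
  have hfinal : ∀ K, 1 ≤ P {ω | G ω = 0} + tail K := fun K =>
    le_trans (hIbound K) (by gcongr; exact hsubtarget K)
  have htail0 : Filter.Tendsto tail Filter.atTop (nhds 0) := by
    have hsum : Summable (fun i => lam * θ i ^ 2) := hθ2.mul_left lam
    have hne : (∑' i : ℕ, ENNReal.ofReal (lam * θ i ^ 2)) ≠ ⊤ := by
      rw [← ENNReal.ofReal_tsum_of_nonneg
        (fun i => by have := hθ i; positivity) hsum]
      exact ENNReal.ofReal_ne_top
    exact ENNReal.tendsto_sum_nat_add (fun i => ENNReal.ofReal (lam * θ i ^ 2)) hne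
  have hlim : Filter.Tendsto (fun K => P {ω | G ω = 0} + tail K) Filter.atTop
      (nhds (P {ω | G ω = 0})) := by
    simpa using (tendsto_const_nhds (x := P {ω | G ω = 0})
      (f := Filter.atTop (α := ℕ))).add htail0
  have h1le : 1 ≤ P {ω | G ω = 0} := ge_of_tendsto' hlim hfinal
  exact le_antisymm prob_le_one h1le
end

section
/- Let λ > 0, t > 0, v ∈ ℝ, let (θ_j)_{j≥1} be positive reals with ∑_j θ_j² < ∞, let ξ_j ~ Exp(θ_j) be independent, and set S(t) = λ∑_j θ_j 1{ξ_j ≤ t} − t. Then the characteristic function φ_t(v) = E[e^{i v S(t)}] satisfies |φ_t(v)|² = ∏_{j=1}^∞ (1 − 2e^{−tθ_j}(1 − e^{−tθ_j})(1 − cos(vλθ_j))), and in particular |φ_t(v)|² ≤ exp(−2∑_j e^{−tθ_j}(1 − e^{−tθ_j})(1 − cos(vλθ_j))). -/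
open MeasureTheory ProbabilityTheory Set

lemma indep_integral_mul_complex {Ω : Type*} [MeasurableSpace Ω] {μ : Measure Ω}
    {X Y : Ω → ℂ} (h : IndepFun X Y μ) (hX : Integrable X μ) (hY : Integrable Y μ)
    (hXY : Integrable (fun ω => X ω * Y ω) μ) :
    ∫ ω, X ω * Y ω ∂μ = (∫ ω, X ω ∂μ) * ∫ ω, Y ω ∂μ := by
  have mre : Measurable fun z : ℂ => z.re := Complex.measurable_re
  have mim : Measurable fun z : ℂ => z.im := Complex.measurable_im
  have ha : Integrable (fun ω => (X ω).re) μ := by simpa using hX.re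
  have hb : Integrable (fun ω => (X ω).im) μ := by simpa using hX.im
  have hc : Integrable (fun ω => (Y ω).re) μ := by simpa using hY.re
  have hd : Integrable (fun ω => (Y ω).im) μ := by simpa using hY.im
  have iac : IndepFun (fun ω => (X ω).re) (fun ω => (Y ω).re) μ := h.comp mre mre
  have iad : IndepFun (fun ω => (X ω).re) (fun ω => (Y ω).im) μ := h.comp mre mim
  have ibc : IndepFun (fun ω => (X ω).im) (fun ω => (Y ω).re) μ := h.comp mim mre
  have ibd : IndepFun (fun ω => (X ω).im) (fun ω => (Y ω).im) μ := h.comp mim mim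
  have hac : Integrable (fun ω => (X ω).re * (Y ω).re) μ := iac.integrable_mul ha hc
  have had : Integrable (fun ω => (X ω).re * (Y ω).im) μ := iad.integrable_mul ha hd
  have hbc : Integrable (fun ω => (X ω).im * (Y ω).re) μ := ibc.integrable_mul hb hc
  have hbd : Integrable (fun ω => (X ω).im * (Y ω).im) μ := ibd.integrable_mul hb hd
  have eac := iac.integral_mul_eq_mul_integral ha.1 hc.1
  have ead := iad.integral_mul_eq_mul_integral ha.1 hd.1
  have ebc := ibc.integral_mul_eq_mul_integral hb.1 hc.1
  have ebd := ibd.integral_mul_eq_mul_integral hb.1 hd.1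
  have hre : ∫ ω, (X ω * Y ω).re ∂μ
      = (∫ ω, (X ω).re ∂μ) * (∫ ω, (Y ω).re ∂μ) - (∫ ω, (X ω).im ∂μ) * ∫ ω, (Y ω).im ∂μ := by
    simp only [Complex.mul_re]
    rw [integral_sub hac hbd, ← eac, ← ebd]; rfl
  have him : ∫ ω, (X ω * Y ω).im ∂μ
      = (∫ ω, (X ω).re ∂μ) * (∫ ω, (Y ω).im ∂μ) + (∫ ω, (X ω).im ∂μ) * ∫ ω, (Y ω).re ∂μ := by
    simp only [Complex.mul_im]
    rw [integral_add had hbc, ← ead, ← ebc]; rfl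
  have d1 := integral_re_add_im (𝕜 := ℂ) hXY
  have d2 := integral_re_add_im (𝕜 := ℂ) hX
  have d3 := integral_re_add_im (𝕜 := ℂ) hY
  simp only [RCLike.re_to_complex, RCLike.im_to_complex, RCLike.I_to_complex] at d1 d2 d3
  rw [← d1, ← d2, ← d3, hre, him]
  apply Complex.ext <;> simp <;> ring

/-- For `S(t) = λ ∑ⱼ θⱼ 1{ξⱼ ≤ t} − t` with `ξⱼ ~ Exp(θⱼ)` independent and `∑ θⱼ² < ∞`,
the characteristic function `φ_t(v) = E[e^{ivS(t)}]` satisfies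
`|φ_t(v)|² = ∏ⱼ (1 − 2e^{−tθⱼ}(1−e^{−tθⱼ})(1−cos(vλθⱼ)))`, and in particular
`|φ_t(v)|² ≤ exp(−2∑ⱼ e^{−tθⱼ}(1−e^{−tθⱼ})(1−cos(vλθⱼ)))`. -/
theorem char_function_squared_modulus
    {Ω : Type*} [MeasurableSpace Ω] (P : Measure Ω) [IsProbabilityMeasure P]
    (θ : ℕ → ℝ) (hθ : ∀ j, 0 < θ j) (hθ2 : Summable (fun j => θ j ^ 2))
    (lam t v : ℝ) (hlam : 0 < lam) (ht : 0 < t)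
    (ξ : ℕ → Ω → ℝ) (hmeas : ∀ j, Measurable (ξ j))
    (hindep : iIndepFun ξ P)
    (hdist : ∀ j, ∀ s : ℝ, 0 ≤ s →
      P {ω | ξ j ω ≤ s} = ENNReal.ofReal (1 - Real.exp (-(θ j) * s)))
    (S : Ω → ℝ)
    (hS : ∀ ω, S ω = lam * (∑' j, θ j * (if ξ j ω ≤ t then (1:ℝ) else 0)) - t) :
    ‖∫ ω, Complex.exp (Complex.I * ((v * S ω : ℝ) : ℂ)) ∂P‖ ^ 2
        = ∏' j, (1 - 2 * Real.exp (-t * θ j) * (1 - Real.exp (-t * θ j))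
            * (1 - Real.cos (v * lam * θ j))) ∧
      ‖∫ ω, Complex.exp (Complex.I * ((v * S ω : ℝ) : ℂ)) ∂P‖ ^ 2
        ≤ Real.exp (-2 * ∑' j, Real.exp (-t * θ j) * (1 - Real.exp (-t * θ j))
            * (1 - Real.cos (v * lam * θ j))) := by
  classical
  set B : ℕ → Ω → ℝ := fun j ω => if ξ j ω ≤ t then (1:ℝ) else 0 with hB
  set T : Ω → ℝ := fun ω => ∑' j, θ j * B j ω with hT
  set x : ℕ → ℝ := fun j => Real.exp (-t * θ j) * (1 - Real.exp (-t * θ j))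
      * (1 - Real.cos (v * lam * θ j)) with hx
  set f : ℕ → ℝ := fun j => 1 - 2 * Real.exp (-t * θ j) * (1 - Real.exp (-t * θ j))
      * (1 - Real.cos (v * lam * θ j)) with hf
  set φ : ℕ → ℝ → ℂ := fun j s =>
    Complex.exp (Complex.I * ((v * lam * (θ j * (if s ≤ t then (1:ℝ) else 0)) : ℝ) : ℂ)) with hφ
  set g : ℕ → Ω → ℂ := fun j => φ j ∘ ξ j with hg
  set c : ℕ → ℂ := fun j =>
    ((1 - Real.exp (-t * θ j) : ℝ) : ℂ)
      * (Complex.exp (Complex.I * ((v * lam * θ j : ℝ) : ℂ)) - 1) + 1 with hc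
  have hB01 : ∀ j ω, 0 ≤ B j ω ∧ B j ω ≤ 1 := by
    intro j ω; by_cases h : ξ j ω ≤ t <;> simp [hB, h]
  have hBmeas : ∀ j, Measurable (B j) := fun j =>
    Measurable.ite (measurableSet_le (hmeas j) measurable_const)
      measurable_const measurable_const
  have hq1 : ∀ j, Real.exp (-t * θ j) ≤ 1 := by
    intro j
    rw [Real.exp_le_one_iff]
    nlinarith [(hθ j), ht]
  have hp0 : ∀ j, 0 ≤ 1 - Real.exp (-t * θ j) := fun j => by linarith [hq1 j]
  have hcos0 : ∀ j, 0 ≤ 1 - Real.cos (v * lam * θ j) := fun j => by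
    linarith [Real.cos_le_one (v * lam * θ j)]
  have hx0 : ∀ j, 0 ≤ x j := by
    intro j
    rw [hx]
    exact mul_nonneg (mul_nonneg (Real.exp_pos _).le (hp0 j)) (hcos0 j)
  have hfx : ∀ j, f j = 1 - 2 * x j := by intro j; rw [hf, hx]; ring
  have hPA : ∀ j, P {ω | ξ j ω ≤ t} = ENNReal.ofReal (1 - Real.exp (-t * θ j)) := by
    intro j
    rw [hdist j t ht.le, show -θ j * t = -t * θ j by ring]
  have hple : ∀ j, 1 - Real.exp (-t * θ j) ≤ t * θ j := by
    intro j
    have h := Real.add_one_le_exp (-t * θ j)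
    nlinarith
  -- a.s. summability
  have hmeasBE : ∀ j, Measurable fun ω => ENNReal.ofReal (θ j * B j ω) := fun j =>
    ((hBmeas j).const_mul (θ j)).ennreal_ofReal
  have hsummable : ∀ᵐ ω ∂P, Summable (fun j => θ j * B j ω) := by
    have hbound : ∀ j, ∫⁻ ω, ENNReal.ofReal (θ j * B j ω) ∂P ≤ ENNReal.ofReal (t * θ j ^ 2) := by
      intro j
      have hAm : MeasurableSet {ω | ξ j ω ≤ t} := measurableSet_le (hmeas j) measurable_const
      have hrepr : (fun ω => ENNReal.ofReal (θ j * B j ω))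
          = Set.indicator {ω | ξ j ω ≤ t} (fun _ => ENNReal.ofReal (θ j)) := by
        funext ω
        by_cases h : ξ j ω ≤ t <;>
          simp [hB, h, Set.indicator, Set.mem_setOf_eq]
      rw [hrepr, lintegral_indicator hAm, setLIntegral_const, hPA j]
      calc ENNReal.ofReal (θ j) * ENNReal.ofReal (1 - Real.exp (-t * θ j))
          ≤ ENNReal.ofReal (θ j) * ENNReal.ofReal (t * θ j) :=
            mul_le_mul_right (ENNReal.ofReal_le_ofReal (hple j)) _
        _ = ENNReal.ofReal (t * θ j ^ 2) := by
            rw [← ENNReal.ofReal_mul (hθ j).le]; congr 1; ring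
    have htot : ∫⁻ ω, ∑' j, ENNReal.ofReal (θ j * B j ω) ∂P < ⊤ := by
      rw [lintegral_tsum fun j => (hmeasBE j).aemeasurable]
      calc ∑' j, ∫⁻ ω, ENNReal.ofReal (θ j * B j ω) ∂P
          ≤ ∑' j, ENNReal.ofReal (t * θ j ^ 2) := ENNReal.tsum_le_tsum hbound
        _ = ENNReal.ofReal (∑' j, t * θ j ^ 2) :=
            (ENNReal.ofReal_tsum_of_nonneg (fun j => by positivity) (hθ2.mul_left t)).symm
        _ < ⊤ := ENNReal.ofReal_lt_top
    have hae := ae_lt_top (Measurable.ennreal_tsum hmeasBE) htot.ne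
    refine hae.mono fun ω hω => ?_
    have hsum := ENNReal.summable_toReal hω.ne
    refine hsum.congr fun j => ?_
    exact ENNReal.toReal_ofReal (mul_nonneg (hθ j).le (hB01 j ω).1)
  -- measurability of the factors
  have hφmeas : ∀ j, Measurable (φ j) := by
    intro j
    apply Complex.measurable_exp.comp
    apply Measurable.const_mul
    apply Complex.measurable_ofReal.comp
    apply Measurable.const_mul
    apply Measurable.const_mul
    exact Measurable.ite (measurableSet_le measurable_id measurable_const)
      measurable_const measurable_const
  have hgmeas : ∀ j, Measurable (g j) := fun j => (hφmeas j).comp (hmeas j)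
  have habs_g : ∀ j ω, ‖g j ω‖ = 1 := by
    intro j ω
    simp [hg, hφ, Complex.norm_exp, Complex.mul_re]
  have hint_g : ∀ j, Integrable (g j) P := by
    intro j
    refine (integrable_const (1:ℝ)).mono' (hgmeas j).aestronglyMeasurable ?_
    exact Filter.Eventually.of_forall fun ω => by
      rw [habs_g j ω]
  -- value of each factor integral
  have hcval : ∀ j, ∫ ω, g j ω ∂P = c j := by
    intro j
    have hAm : MeasurableSet {ω | ξ j ω ≤ t} := measurableSet_le (hmeas j) measurable_const
    have hrepr : (fun ω => g j ω) = fun ω => Set.indicator {ω' | ξ j ω' ≤ t}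
        (fun _ => Complex.exp (Complex.I * ((v * lam * θ j : ℝ) : ℂ)) - 1) ω + 1 := by
      funext ω
      by_cases h : ξ j ω ≤ t
      · simp [hg, hφ, Function.comp, h, Set.indicator, Set.mem_setOf_eq]
      · simp [hg, hφ, Function.comp, h, Set.indicator, Set.mem_setOf_eq]
    rw [hrepr, integral_add ((integrable_const _).indicator hAm) (integrable_const 1),
      integral_indicator_const _ hAm, integral_const, measureReal_def, hPA j, probReal_univ]
    simp only [hc, ENNReal.toReal_one, one_smul, ENNReal.toReal_ofReal (hp0 j),
      Complex.real_smul]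
  -- independence of the factors and product formula
  have hgindep : iIndepFun g P := hindep.comp φ hφmeas
  have hintprod : ∀ n, Integrable (fun ω => ∏ j ∈ Finset.range n, g j ω) P := by
    intro n
    refine (integrable_const (1:ℝ)).mono'
      (Finset.measurable_prod _ fun j _ => hgmeas j).aestronglyMeasurable ?_
    refine Filter.Eventually.of_forall fun ω => ?_
    rw [Complex.norm_prod]
    simp [habs_g]
  have hprod : ∀ n, ∫ ω, (∏ j ∈ Finset.range n, g j ω) ∂P = ∏ j ∈ Finset.range n, c j := by
    intro n
    induction n with
    | zero => simp
    | succ n ih =>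
      simp_rw [Finset.prod_range_succ]
      have hi : IndepFun (∏ j ∈ Finset.range n, g j) (g n) P :=
        hgindep.indepFun_prod_range_succ hgmeas n
      have hpa : (∏ j ∈ Finset.range n, g j) = fun ω => ∏ j ∈ Finset.range n, g j ω :=
        funext fun ω => Finset.prod_apply ω _ g
      rw [hpa] at hi
      have hXY : Integrable (fun ω => (∏ j ∈ Finset.range n, g j ω) * g n ω) P := by
        refine (integrable_const (1:ℝ)).mono'
          (((Finset.measurable_prod _ fun j _ => hgmeas j).mul (hgmeas n))).aestronglyMeasurable ?_
        refine Filter.Eventually.of_forall fun ω => ?_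
        rw [norm_mul, Complex.norm_prod]
        simp [habs_g]
      rw [indep_integral_mul_complex hi (hintprod n) (hint_g n) hXY, ih, hcval n]
  -- dominated convergence
  have hlim : ∀ᵐ ω ∂P, Filter.Tendsto (fun n => ∏ j ∈ Finset.range n, g j ω) Filter.atTop
      (nhds (Complex.exp (Complex.I * ((v * lam * T ω : ℝ) : ℂ)))) := by
    refine hsummable.mono fun ω hω => ?_
    have h1 : Filter.Tendsto (fun n => ∑ j ∈ Finset.range n, θ j * B j ω) Filter.atTop
        (nhds (T ω)) := hω.hasSum.tendsto_sum_nat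
    have hcont : Continuous fun y : ℝ => Complex.exp (Complex.I * ((v * lam * y : ℝ) : ℂ)) :=
      Complex.continuous_exp.comp (continuous_const.mul
        (Complex.continuous_ofReal.comp (continuous_const.mul continuous_id)))
    have h2 := ((hcont.tendsto (T ω)).comp h1)
    refine h2.congr fun n => ?_
    show Complex.exp (Complex.I * ((v * lam * (∑ j ∈ Finset.range n, θ j * B j ω) : ℝ) : ℂ))
        = ∏ j ∈ Finset.range n, g j ω
    have : ∀ j, g j ω
        = Complex.exp (Complex.I * ((v * lam * (θ j * B j ω) : ℝ) : ℂ)) := fun j => rfl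
    simp_rw [this, ← Complex.exp_sum]
    congr 1
    rw [← Finset.mul_sum, ← Complex.ofReal_sum, ← Finset.mul_sum]
  have key : Filter.Tendsto (fun n => ∏ j ∈ Finset.range n, c j) Filter.atTop
      (nhds (∫ ω, Complex.exp (Complex.I * ((v * lam * T ω : ℝ) : ℂ)) ∂P)) := by
    have hdct := tendsto_integral_of_dominated_convergence (μ := P)
      (F := fun n ω => ∏ j ∈ Finset.range n, g j ω) (fun _ => (1:ℝ))
      (fun n => (hintprod n).1) (integrable_const 1)
      (fun n => Filter.Eventually.of_forall fun ω => by
        rw [Complex.norm_prod]; simp [habs_g])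
      hlim
    exact Filter.Tendsto.congr (fun n => hprod n) hdct
  -- relating the two characteristic functions
  have habs_eq : ‖∫ ω, Complex.exp (Complex.I * ((v * S ω : ℝ) : ℂ)) ∂P‖ ^ 2
      = ‖∫ ω, Complex.exp (Complex.I * ((v * lam * T ω : ℝ) : ℂ)) ∂P‖ ^ 2 := by
    have hpt : ∀ ω, Complex.exp (Complex.I * ((v * S ω : ℝ) : ℂ))
        = Complex.exp (Complex.I * ((-(v * t) : ℝ) : ℂ))
          * Complex.exp (Complex.I * ((v * lam * T ω : ℝ) : ℂ)) := by
      intro ω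
      rw [← Complex.exp_add, hS ω]
      congr 1
      have : T ω = ∑' j, θ j * (if ξ j ω ≤ t then (1:ℝ) else 0) := rfl
      rw [this]
      push_cast
      ring
    simp_rw [hpt]
    rw [integral_const_mul, norm_mul, Complex.norm_exp]
    simp [Complex.mul_re]
  -- modulus squared of each factor
  have habsc : ∀ j, ‖c j‖ ^ 2 = f j := by
    intro j
    rw [Complex.sq_norm, hc, hf]
    dsimp only
    rw [mul_comm Complex.I, Complex.exp_mul_I, Complex.normSq_apply]
    simp only [Complex.add_re, Complex.add_im, Complex.sub_re, Complex.sub_im, Complex.mul_re,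
      Complex.mul_im, Complex.ofReal_re, Complex.ofReal_im, Complex.one_re, Complex.one_im,
      Complex.cos_ofReal_re, Complex.cos_ofReal_im, Complex.sin_ofReal_re, Complex.sin_ofReal_im,
      Complex.I_re, Complex.I_im]
    linear_combination (1 - Real.exp (-t * θ j)) ^ 2 * Real.sin_sq_add_cos_sq (v * lam * θ j)
  have habs_lim : Filter.Tendsto (fun n => ∏ j ∈ Finset.range n, f j) Filter.atTop
      (nhds (‖∫ ω, Complex.exp (Complex.I * ((v * lam * T ω : ℝ) : ℂ)) ∂P‖ ^ 2)) := by
    have h1 : Filter.Tendsto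
        (fun n => ‖∏ j ∈ Finset.range n, c j‖ ^ 2) Filter.atTop
        (nhds (‖∫ ω, Complex.exp (Complex.I * ((v * lam * T ω : ℝ) : ℂ)) ∂P‖ ^ 2)) :=
      ((continuous_norm.tendsto _).comp key).pow 2
    refine h1.congr fun n => ?_
    rw [Complex.norm_prod, ← Finset.prod_pow]
    exact Finset.prod_congr rfl fun j _ => habsc j
  have hf0 : ∀ j, 0 ≤ f j := fun j => (habsc j) ▸ sq_nonneg _
  have hf1 : ∀ j, f j ≤ 1 := fun j => by rw [hfx j]; linarith [hx0 j]
  -- multipliability via antitone partial products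
  have hmul : Multipliable f := by
    refine ⟨⨅ s : Finset ℕ, ∏ j ∈ s, f j, ?_⟩
    apply tendsto_atTop_ciInf
    · intro s u hsu
      dsimp only
      rw [← Finset.prod_sdiff hsu]
      calc (∏ j ∈ u \ s, f j) * ∏ j ∈ s, f j ≤ 1 * ∏ j ∈ s, f j := by
            apply mul_le_mul_of_nonneg_right
            · exact Finset.prod_le_one (fun j _ => hf0 j) (fun j _ => hf1 j)
            · exact Finset.prod_nonneg fun j _ => hf0 j
        _ = ∏ j ∈ s, f j := one_mul _
    · exact ⟨0, by rintro y ⟨s, rfl⟩; exact Finset.prod_nonneg fun j _ => hf0 j⟩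
  have heq : ∏' j, f j
      = ‖∫ ω, Complex.exp (Complex.I * ((v * lam * T ω : ℝ) : ℂ)) ∂P‖ ^ 2 :=
    tendsto_nhds_unique hmul.hasProd.tendsto_prod_nat habs_lim
  -- summability of x
  have hsx : Summable x := by
    have hθ0 : Filter.Tendsto θ Filter.atTop (nhds 0) := by
      have h2 := hθ2.tendsto_atTop_zero
      have h3 : Filter.Tendsto (fun j => Real.sqrt (θ j ^ 2)) Filter.atTop (nhds 0) := by
        have := (Real.continuous_sqrt.tendsto' 0 0 Real.sqrt_zero).comp h2
        exact this
      exact h3.congr fun j => by rw [Real.sqrt_sq (hθ j).le]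
    obtain ⟨M, hM⟩ := hθ0.bddAbove_range
    have hθ3 : Summable (fun j => θ j ^ 3) := by
      refine Summable.of_nonneg_of_le (fun j => pow_nonneg (hθ j).le 3) (fun j => ?_) (hθ2.mul_left M)
      have h1 : θ j ≤ M := hM ⟨j, rfl⟩
      nlinarith [(hθ j), sq_nonneg (θ j)]
    refine Summable.of_nonneg_of_le hx0 (fun j => ?_) (hθ3.mul_left (t * (v * lam) ^ 2 / 2))
    have h1 := hple j
    have h2 : 1 - Real.cos (v * lam * θ j) ≤ (v * lam * θ j) ^ 2 / 2 := by
      have := Real.one_sub_sq_div_two_le_cos (x := v * lam * θ j); linarith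
    have h3 := hq1 j
    have h4 := (Real.exp_pos (-t * θ j)).le
    have h5 := hcos0 j
    have h6 := hp0 j
    rw [hx]
    dsimp only
    have h7 : (1 - Real.exp (-t * θ j)) * (1 - Real.cos (v * lam * θ j))
        ≤ (t * θ j) * ((v * lam * θ j) ^ 2 / 2) := by
      exact mul_le_mul h1 h2 h5 (mul_nonneg ht.le (hθ j).le)
    nlinarith [mul_nonneg h6 h5]
  constructor
  · rw [habs_eq, ← heq]
  · rw [habs_eq, ← heq]
    have hstep : ∀ n, ∏ j ∈ Finset.range n, f j
        ≤ Real.exp (-2 * ∑ j ∈ Finset.range n, x j) := by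
      intro n
      calc ∏ j ∈ Finset.range n, f j ≤ ∏ j ∈ Finset.range n, Real.exp (-(2 * x j)) := by
            apply Finset.prod_le_prod (fun j _ => hf0 j)
            intro j _
            have := Real.add_one_le_exp (-(2 * x j))
            rw [hfx j]; linarith
        _ = Real.exp (∑ j ∈ Finset.range n, -(2 * x j)) := (Real.exp_sum _ _).symm
        _ = Real.exp (-2 * ∑ j ∈ Finset.range n, x j) := by
            congr 1
            rw [Finset.mul_sum]
            exact Finset.sum_congr rfl fun j _ => by ring
    have hlim2 : Filter.Tendsto (fun n => Real.exp (-2 * ∑ j ∈ Finset.range n, x j))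
        Filter.atTop (nhds (Real.exp (-2 * ∑' j, x j))) :=
      (Real.continuous_exp.tendsto _).comp ((hsx.hasSum.tendsto_sum_nat).const_mul (-2))
    exact le_of_tendsto_of_tendsto' hmul.hasProd.tendsto_prod_nat hlim2 hstep
end
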